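/- arXiv:2311.00222 — 3 statements merged into one kernel-verified Lean document; each statement's English description precedes it below -/
import Mathlib

section
/- A strategy profile V̂ : Fin n → Finset (Fin m) is a Nash equilibrium of the partition game if and only if there exists a Nash equilibrium ŵ of the weight game with C(ŵ) = V̂, i.e., V̂ i = {q | ŵ i q = 1} for every agent i. -/
open Finset Filter

noncomputable def fsMax (s : Finset ℝ) : ℝ := s.max.unbotD 0

noncomputable def fsMin (s : Finset ℝ) : ℝ := s.min.untopD 0

noncomputable def fsSubmax (s : Finset ℝ) : ℝ := fsMax (s.filter (fun x => x < fsMax s))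

/-- Agent `i` is dominating for task `q`. -/
def Dominating {n m : ℕ} (f : Fin n → Fin m → ℝ) (i : Fin n) (q : Fin m) : Prop :=
  ∀ j, f j q ≤ f i q

/-- Maximum of `f j q` over agents `j ≠ i` with `q ∈ V j` (0 if that set is empty). -/
noncomputable def othersMax {n m : ℕ} (f : Fin n → Fin m → ℝ)
    (V : Fin n → Finset (Fin m)) (i : Fin n) (q : Fin m) : ℝ :=
  fsMax ((Finset.univ.filter (fun j => j ≠ i ∧ q ∈ V j)).image (fun j => f j q))

/-- Utility of agent `i` in the partition game. -/
noncomputable def Hutil {n m : ℕ} (f : Fin n → Fin m → ℝ)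
    (V : Fin n → Finset (Fin m)) (i : Fin n) : ℝ :=
  ∑ q ∈ V i, (f i q - othersMax f V i q)

/-- Nash equilibrium of the partition game. -/
def IsNashP {n m : ℕ} (f : Fin n → Fin m → ℝ) (V : Fin n → Finset (Fin m)) : Prop :=
  ∀ i, ∀ V' : Finset (Fin m), Hutil f (Function.update V i V') i ≤ Hutil f V i

/-- Maximum of `g j` over all `j ≠ i` (0 if that set is empty). -/
noncomputable def maxErase {n : ℕ} (i : Fin n) (g : Fin n → ℝ) : ℝ :=
  fsMax ((Finset.univ.erase i).image g)

/-- Utility of agent `i` in the weight game. -/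
noncomputable def Uutil {n m : ℕ} (f : Fin n → Fin m → ℝ) (w : Fin n → Fin m → ℝ)
    (i : Fin n) : ℝ :=
  ∑ q, (f i q * w i q - maxErase i (fun j => f j q * w j q) * w i q)

/-- All entries of the matrix lie in `[0,1]`. -/
def InUnit {n m : ℕ} (w : Fin n → Fin m → ℝ) : Prop :=
  ∀ i q, w i q ∈ Set.Icc (0 : ℝ) 1

/-- Nash equilibrium of the weight game. -/
def IsNashW {n m : ℕ} (f : Fin n → Fin m → ℝ) (w : Fin n → Fin m → ℝ) : Prop :=
  ∀ i, ∀ w' : Fin m → ℝ, (∀ q, w' q ∈ Set.Icc (0 : ℝ) 1) →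
    Uutil f (Function.update w i w') i ≤ Uutil f w i

open Classical in
lemma fsMax_eq_max' {s : Finset ℝ} (h : s.Nonempty) : fsMax s = s.max' h := by
  simp [fsMax, ← Finset.coe_max' h]

lemma le_fsMax {s : Finset ℝ} {x : ℝ} (hx : x ∈ s) : x ≤ fsMax s := by
  rw [fsMax_eq_max' ⟨x, hx⟩]; exact Finset.le_max' _ _ hx

lemma fsMax_le {s : Finset ℝ} {a : ℝ} (ha : 0 ≤ a) (h : ∀ x ∈ s, x ≤ a) :
    fsMax s ≤ a := by
  rcases s.eq_empty_or_nonempty with rfl | hs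
  · simpa [fsMax] using ha
  · rw [fsMax_eq_max' hs]; exact Finset.max'_le _ _ _ h

lemma fsMax_mem {s : Finset ℝ} (hs : s.Nonempty) : fsMax s ∈ s := by
  rw [fsMax_eq_max' hs]; exact s.max'_mem hs

lemma fsMax_nonneg {s : Finset ℝ} (h : ∀ x ∈ s, 0 ≤ x) : 0 ≤ fsMax s := by
  rcases s.eq_empty_or_nonempty with rfl | hs
  · simp [fsMax]
  · exact h _ (fsMax_mem hs)

open Classical in
lemma othersMax_update {n m : ℕ} (f : Fin n → Fin m → ℝ) (V : Fin n → Finset (Fin m))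
    (i : Fin n) (V' : Finset (Fin m)) (q : Fin m) :
    othersMax f (Function.update V i V') i q = othersMax f V i q := by
  unfold othersMax
  have : (Finset.univ.filter (fun j => j ≠ i ∧ q ∈ Function.update V i V' j)) =
      (Finset.univ.filter (fun j => j ≠ i ∧ q ∈ V j)) := by
    apply Finset.filter_congr
    intro j _
    rcases eq_or_ne j i with rfl | h
    · simp
    · simp [Function.update_of_ne h]
  rw [this]

lemma maxErase_update {n m : ℕ} (f : Fin n → Fin m → ℝ) (w : Fin n → Fin m → ℝ)
    (i : Fin n) (w' : Fin m → ℝ) (q : Fin m) :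
    maxErase i (fun j => f j q * Function.update w i w' j q) =
      maxErase i (fun j => f j q * w j q) := by
  unfold maxErase
  congr 1
  apply Finset.image_congr
  intro j hj
  have hji : j ≠ i := Finset.ne_of_mem_erase (Finset.mem_coe.mp hj)
  simp [Function.update_of_ne hji]

open Classical in
lemma Hutil_update {n m : ℕ} (f : Fin n → Fin m → ℝ) (V : Fin n → Finset (Fin m))
    (i : Fin n) (V' : Finset (Fin m)) :
    Hutil f (Function.update V i V') i = ∑ q ∈ V', (f i q - othersMax f V i q) := by
  unfold Hutil
  rw [Function.update_self]
  exact Finset.sum_congr rfl (fun q _ => by rw [othersMax_update])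

open Classical in
lemma isNashP_iff {n m : ℕ} (f : Fin n → Fin m → ℝ) (V : Fin n → Finset (Fin m)) :
    IsNashP f V ↔ ∀ i q, (q ∈ V i → othersMax f V i q ≤ f i q) ∧
      (q ∉ V i → f i q ≤ othersMax f V i q) := by
  constructor
  · intro h i q
    constructor
    · intro hq
      have key := h i ((V i).erase q)
      rw [Hutil_update] at key
      unfold Hutil at key
      rw [← Finset.add_sum_erase _ _ hq] at key
      linarith
    · intro hq
      have key := h i (insert q (V i))
      rw [Hutil_update, Finset.sum_insert hq] at key
      unfold Hutil at key
      linarith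
  · intro h i V'
    rw [Hutil_update]
    unfold Hutil
    have h1 : ∑ q ∈ V' ∩ V i, (f i q - othersMax f V i q)
        + ∑ q ∈ V' \ V i, (f i q - othersMax f V i q)
        = ∑ q ∈ V', (f i q - othersMax f V i q) :=
      Finset.sum_inter_add_sum_sdiff _ _ _
    have h2 : ∑ q ∈ V' \ V i, (f i q - othersMax f V i q) ≤ 0 := by
      apply Finset.sum_nonpos
      intro q hq
      have := (h i q).2 (Finset.mem_sdiff.mp hq).2
      linarith
    have h3 : ∑ q ∈ V' ∩ V i, (f i q - othersMax f V i q)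
        ≤ ∑ q ∈ V i, (f i q - othersMax f V i q) := by
      apply Finset.sum_le_sum_of_subset_of_nonneg (Finset.inter_subset_right)
      intro q hq _
      have := (h i q).1 hq
      linarith
    linarith

lemma Uutil_eq {n m : ℕ} (f : Fin n → Fin m → ℝ) (w : Fin n → Fin m → ℝ) (i : Fin n) :
    Uutil f w i = ∑ q, w i q * (f i q - maxErase i (fun j => f j q * w j q)) := by
  unfold Uutil
  exact Finset.sum_congr rfl (fun q _ => by ring)

lemma Uutil_update {n m : ℕ} (f : Fin n → Fin m → ℝ) (w : Fin n → Fin m → ℝ)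
    (i : Fin n) (w' : Fin m → ℝ) :
    Uutil f (Function.update w i w') i
      = ∑ q, w' q * (f i q - maxErase i (fun j => f j q * w j q)) := by
  rw [Uutil_eq]
  apply Finset.sum_congr rfl
  intro q _
  rw [Function.update_self, maxErase_update]

lemma isNashW_iff {n m : ℕ} (f : Fin n → Fin m → ℝ) (w : Fin n → Fin m → ℝ)
    (hw : InUnit w) :
    IsNashW f w ↔ ∀ i q, ∀ t ∈ Set.Icc (0:ℝ) 1,
      t * (f i q - maxErase i (fun j => f j q * w j q)) ≤
      w i q * (f i q - maxErase i (fun j => f j q * w j q)) := by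
  constructor
  · intro h i q t ht
    have key := h i (Function.update (w i) q t) (by
      intro q'
      rcases eq_or_ne q' q with rfl | hq
      · simpa using ht
      · simpa [Function.update_of_ne hq] using hw i q')
    rw [Uutil_update, Uutil_eq] at key
    set c : Fin m → ℝ := fun q' => f i q' - maxErase i (fun j => f j q' * w j q') with hc
    have e1 : ∑ q' ∈ Finset.univ.erase q, Function.update (w i) q t q' * c q'
        = ∑ q' ∈ Finset.univ.erase q, w i q' * c q' := by
      apply Finset.sum_congr rfl
      intro q' hq'
      rw [Function.update_of_ne (Finset.ne_of_mem_erase hq')]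
    rw [← Finset.add_sum_erase _ (fun q' => Function.update (w i) q t q' * c q')
        (Finset.mem_univ q),
        ← Finset.add_sum_erase _ (fun q' => w i q' * c q') (Finset.mem_univ q), e1,
        Function.update_self] at key
    show t * c q ≤ w i q * c q
    linarith
  · intro h i w' hw'
    rw [Uutil_update, Uutil_eq]
    exact Finset.sum_le_sum (fun q _ => h i q (w' q) (hw' q))

open Classical in
lemma maxErase_indicator {n m : ℕ} (f : Fin n → Fin m → ℝ) (hf : ∀ i q, 0 ≤ f i q)
    (V : Fin n → Finset (Fin m)) (i : Fin n) (q : Fin m) :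
    maxErase i (fun j => f j q * (if q ∈ V j then (1:ℝ) else 0)) = othersMax f V i q := by
  have hBnn : 0 ≤ othersMax f V i q := by
    apply fsMax_nonneg
    intro x hx
    obtain ⟨j, _, rfl⟩ := Finset.mem_image.mp hx
    exact hf j q
  have hAnn : (0:ℝ) ≤ maxErase i (fun j => f j q * (if q ∈ V j then (1:ℝ) else 0)) := by
    apply fsMax_nonneg
    intro x hx
    obtain ⟨j, _, rfl⟩ := Finset.mem_image.mp hx
    have := hf j q
    positivity
  apply le_antisymm
  · apply fsMax_le hBnn
    intro x hx
    obtain ⟨j, hj, rfl⟩ := Finset.mem_image.mp hx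
    have hji : j ≠ i := Finset.ne_of_mem_erase hj
    by_cases hq : q ∈ V j
    · simp only [hq, if_true, mul_one]
      exact le_fsMax (Finset.mem_image.mpr ⟨j, Finset.mem_filter.mpr
        ⟨Finset.mem_univ j, hji, hq⟩, rfl⟩)
    · simpa [hq] using hBnn
  · apply fsMax_le hAnn
    intro x hx
    obtain ⟨j, hj, rfl⟩ := Finset.mem_image.mp hx
    obtain ⟨_, hji, hq⟩ := Finset.mem_filter.mp hj
    have : f j q = f j q * (if q ∈ V j then (1:ℝ) else 0) := by simp [hq]
    rw [this]
    exact le_fsMax (Finset.mem_image.mpr ⟨j, Finset.mem_erase.mpr ⟨hji, Finset.mem_univ j⟩, rfl⟩)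
open Classical in
theorem nash_partition_eq_image_of_nash_weight {n m : ℕ} (f : Fin n → Fin m → ℝ)
    (hf : ∀ i q, 0 ≤ f i q)
    (hnt : ∀ q : Fin m, ∃ j : Fin n, ¬ Dominating f j q)
    (Vhat : Fin n → Finset (Fin m)) :
    IsNashP f Vhat ↔
      ∃ what : Fin n → Fin m → ℝ, InUnit what ∧ IsNashW f what ∧
        ∀ i, Vhat i = Finset.univ.filter (fun q => what i q = 1) := by
  constructor
  · -- forward: take the indicator weights
    intro hP
    refine ⟨fun i q => if q ∈ Vhat i then (1:ℝ) else 0, ?_, ?_, ?_⟩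
    · intro i q
      by_cases h : q ∈ Vhat i <;> simp [h]
    · have hPt := (isNashP_iff f Vhat).mp hP
      rw [isNashW_iff]
      · intro i q t ht
        rw [maxErase_indicator f hf]
        obtain ⟨ht0, ht1⟩ := ht
        by_cases hq : q ∈ Vhat i
        · have hge := (hPt i q).1 hq
          simp only [hq, if_true]
          nlinarith
        · have hle := (hPt i q).2 hq
          simp only [hq, if_false]
          nlinarith
      · intro i q
        by_cases h : q ∈ Vhat i <;> simp [h]
    · intro i
      ext q
      by_cases h : q ∈ Vhat i <;> simp [h]
  · -- backward
    rintro ⟨what, hw, hN, hC⟩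
    have hmem : ∀ i q, q ∈ Vhat i ↔ what i q = 1 := by
      intro i q
      rw [hC i]
      simp
    have hPt := (isNashW_iff f what hw).mp hN
    set M : Fin n → Fin m → ℝ := fun i q => maxErase i (fun j => f j q * what j q) with hM
    have hMnn : ∀ i q, 0 ≤ M i q := by
      intro i q
      apply fsMax_nonneg
      intro x hx
      obtain ⟨j, _, rfl⟩ := Finset.mem_image.mp hx
      exact mul_nonneg (hf j q) (hw j q).1
    have hmnn : ∀ i q, 0 ≤ othersMax f Vhat i q := by
      intro i q
      apply fsMax_nonneg
      intro x hx
      obtain ⟨j, _, rfl⟩ := Finset.mem_image.mp hx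
      exact hf j q
    -- othersMax ≤ M
    have hmM : ∀ (i : Fin n) (q : Fin m), othersMax f Vhat i q ≤ M i q := by
      intro i q
      apply fsMax_le (hMnn i q)
      intro x hx
      obtain ⟨j, hj, rfl⟩ := Finset.mem_image.mp hx
      obtain ⟨_, hji, hq⟩ := Finset.mem_filter.mp hj
      have h1 : what j q = 1 := (hmem j q).mp hq
      have : f j q = f j q * what j q := by rw [h1, mul_one]
      rw [this]
      exact le_fsMax (Finset.mem_image.mpr ⟨j, Finset.mem_erase.mpr ⟨hji, Finset.mem_univ j⟩, rfl⟩)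
    rw [isNashP_iff]
    intro i q
    constructor
    · intro hq
      have h1 : what i q = 1 := (hmem i q).mp hq
      have key := hPt i q 0 (by constructor <;> norm_num)
      rw [h1] at key
      simp only [zero_mul, one_mul] at key
      have : M i q ≤ f i q := by linarith [key]
      linarith [hmM i q]
    · intro hq
      have h1 : what i q ≠ 1 := fun h => hq ((hmem i q).mpr h)
      have hlt1 : what i q < 1 := lt_of_le_of_ne (hw i q).2 h1
      have key := hPt i q 1 (by constructor <;> norm_num)
      rw [one_mul] at key
      -- f i q ≤ M i q
      have hfM : f i q ≤ M i q := by nlinarith [hlt1, key]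
      rcases (hMnn i q).eq_or_lt with hM0 | hMpos
      · -- M = 0, hence f i q = 0 ≤ othersMax
        have : f i q = 0 := le_antisymm (by linarith) (hf i q)
        rw [this]; exact hmnn i q
      · -- M > 0: the maximizer has weight 1
        have hAne : ((Finset.univ.erase i).image (fun j => f j q * what j q)).Nonempty := by
          by_contra hA
          rw [Finset.not_nonempty_iff_eq_empty] at hA
          have : M i q = 0 := by simp [hM, maxErase, hA, fsMax]
          linarith
        obtain ⟨k, hk, hMk⟩ := Finset.mem_image.mp (fsMax_mem hAne)
        have hki : k ≠ i := Finset.ne_of_mem_erase hk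
        have hMk2 : f k q * what k q = M i q := hMk
        clear hMk
        -- hMk2 : f k q * what k q = M i q
        have hfk_pos : 0 < f k q := by
          rcases (hf k q).eq_or_lt with h | h
          · exfalso; rw [← h, zero_mul] at hMk2; linarith
          · exact h
        have hwk1 : what k q = 1 := by
          by_contra hne
          have hwklt : what k q < 1 := lt_of_le_of_ne (hw k q).2 hne
          have hfk_gt : M i q < f k q := by nlinarith [hMk2]
          -- M k q ≤ M i q
          have hMkM : M k q ≤ M i q := by
            apply fsMax_le (hMnn i q)
            intro x hx
            obtain ⟨j, hj, rfl⟩ := Finset.mem_image.mp hx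
            have hjk : j ≠ k := Finset.ne_of_mem_erase hj
            rcases eq_or_ne j i with rfl | hji
            · nlinarith [hfM, (hw j q).2, hf j q]
            · exact le_fsMax (Finset.mem_image.mpr
                ⟨j, Finset.mem_erase.mpr ⟨hji, Finset.mem_univ j⟩, rfl⟩)
          have keyk := hPt k q 1 (by constructor <;> norm_num)
          rw [one_mul] at keyk
          -- f k q - M k q > 0, so what k q ≥ 1, contradiction
          have hpos : 0 < f k q - M k q := by linarith
          nlinarith [keyk, hwklt]
        -- k has weight 1, so q ∈ Vhat k and f k q = M i q ≥ f i q
        have hqk : q ∈ Vhat k := (hmem k q).mpr hwk1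
        have : f k q ≤ othersMax f Vhat i q :=
          le_fsMax (Finset.mem_image.mpr ⟨k, Finset.mem_filter.mpr
            ⟨Finset.mem_univ k, hki, hqk⟩, rfl⟩)
        rw [hwk1, mul_one] at hMk2
        linarith
end

section
/- For every optimal partition P* there exists a Nash equilibrium ŵ of the weight game with C(ŵ) = P*, i.e., P* i = {q | ŵ i q = 1} for every agent i. -/
open Finset Filter

/-- `P` is a partition of the task set: pairwise disjoint with union everything. -/
def IsPartitionP {n m : ℕ} (P : Fin n → Finset (Fin m)) : Prop :=
  (∀ i j, i ≠ j → Disjoint (P i) (P j)) ∧ (∀ q, ∃ i, q ∈ P i)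

/-- Value of a partition. -/
noncomputable def Jval {n m : ℕ} (f : Fin n → Fin m → ℝ) (P : Fin n → Finset (Fin m)) : ℝ :=
  ∑ i, ∑ q ∈ P i, f i q

/-- Optimal partition. -/
def IsOptimalPartition {n m : ℕ} (f : Fin n → Fin m → ℝ) (P : Fin n → Finset (Fin m)) : Prop :=
  IsPartitionP P ∧ ∀ P', IsPartitionP P' → Jval f P' ≤ Jval f P

lemma fsMax_zero (s : Finset ℝ) (h : ∀ x ∈ s, x = 0) : fsMax s = 0 := by
  rcases s.eq_empty_or_nonempty with rfl | ⟨x, hx⟩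
  · simp [fsMax]
  · have hs : s = {0} := Finset.eq_singleton_iff_nonempty_unique_mem.mpr ⟨⟨x, hx⟩, h⟩
    simp [hs, fsMax]

lemma mem_opt_dominating {n m : ℕ} (f : Fin n → Fin m → ℝ)
    (Pstar : Fin n → Finset (Fin m)) (hopt : IsOptimalPartition f Pstar)
    {i : Fin n} {q : Fin m} (hq : q ∈ Pstar i) : ∀ j, f j q ≤ f i q := by
  by_contra h
  push_neg at h
  obtain ⟨j, hj⟩ := h
  have hji : j ≠ i := by rintro rfl; exact lt_irrefl _ hj
  classical
  have hdisj := hopt.1.1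
  have hcov := hopt.1.2
  have hqnot : ∀ k, k ≠ i → q ∉ Pstar k := fun k hk hmem =>
    Finset.disjoint_left.mp (hdisj k i hk) hmem hq
  set P' : Fin n → Finset (Fin m) := fun k =>
    if k = i then (Pstar i).erase q else if k = j then insert q (Pstar j) else Pstar k with hP'
  have hPk : ∀ k, P' k =
      if k = i then (Pstar i).erase q else if k = j then insert q (Pstar j) else Pstar k :=
    fun k => rfl
  have hsub : ∀ k x, x ∈ P' k → x ∈ Pstar k ∨ (k = j ∧ x = q) := by
    intro k x hx
    rw [hPk k] at hx
    by_cases hk : k = i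
    · subst hk; rw [if_pos rfl] at hx
      exact Or.inl (Finset.mem_of_mem_erase hx)
    · rw [if_neg hk] at hx
      by_cases hk' : k = j
      · subst hk'; rw [if_pos rfl, Finset.mem_insert] at hx
        rcases hx with rfl | hx
        · exact Or.inr ⟨rfl, rfl⟩
        · exact Or.inl hx
      · rw [if_neg hk'] at hx; exact Or.inl hx
  have hqiff : ∀ k, q ∈ P' k → k = j := by
    intro k hk
    rw [hPk k] at hk
    by_cases h1 : k = i
    · subst h1; rw [if_pos rfl] at hk
      exact absurd rfl (Finset.ne_of_mem_erase hk)
    · rw [if_neg h1] at hk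
      by_cases h2 : k = j
      · exact h2
      · rw [if_neg h2] at hk
        exact absurd hk (hqnot k h1)
  have hpart : IsPartitionP P' := by
    constructor
    · intro a b hab
      rw [Finset.disjoint_left]
      intro x hxa hxb
      by_cases hxq : x = q
      · subst hxq
        exact hab ((hqiff a hxa).trans (hqiff b hxb).symm)
      · have ha' : x ∈ Pstar a := by
          rcases hsub a x hxa with h' | ⟨_, h'⟩
          · exact h'
          · exact absurd h' hxq
        have hb' : x ∈ Pstar b := by
          rcases hsub b x hxb with h' | ⟨_, h'⟩
          · exact h'
          · exact absurd h' hxq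
        exact Finset.disjoint_left.mp (hdisj a b hab) ha' hb'
    · intro x
      by_cases hxq : x = q
      · subst hxq
        refine ⟨j, ?_⟩
        rw [hPk j, if_neg hji, if_pos rfl]
        exact Finset.mem_insert_self _ _
      · obtain ⟨k, hk⟩ := hcov x
        by_cases h1 : k = i
        · subst h1
          refine ⟨k, ?_⟩
          rw [hPk k, if_pos rfl]
          exact Finset.mem_erase.mpr ⟨hxq, hk⟩
        · by_cases h2 : k = j
          · subst h2
            refine ⟨k, ?_⟩
            rw [hPk k, if_neg h1, if_pos rfl]
            exact Finset.mem_insert_of_mem hk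
          · refine ⟨k, ?_⟩
            simp only [hP', if_neg h1, if_neg h2]
            exact hk
  have hqj : q ∉ Pstar j := hqnot j hji
  have hsumi : ∑ x ∈ P' i, f i x = (∑ x ∈ Pstar i, f i x) - f i q := by
    rw [hPk i, if_pos rfl, Finset.sum_erase_eq_sub hq]
  have hsumj : ∑ x ∈ P' j, f j x = (∑ x ∈ Pstar j, f j x) + f j q := by
    rw [hPk j, if_neg hji, if_pos rfl, Finset.sum_insert hqj]
    ring
  have hsumk : ∀ k, k ≠ i → k ≠ j → ∑ x ∈ P' k, f k x = ∑ x ∈ Pstar k, f k x := by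
    intro k h1 h2
    rw [hPk k, if_neg h1, if_neg h2]
  have hkey : Jval f P' = Jval f Pstar + (f j q - f i q) := by
    unfold Jval
    have : ∀ k : Fin n, ∑ x ∈ P' k, f k x =
        (∑ x ∈ Pstar k, f k x) + ((if k = i then -f i q else 0) + (if k = j then f j q else 0)) := by
      intro k
      by_cases h1 : k = i
      · subst h1
        rw [if_pos rfl, if_neg (Ne.symm hji), hsumi]; ring
      · by_cases h2 : k = j
        · subst h2
          rw [if_neg h1, if_pos rfl, hsumj]; ring
        · rw [if_neg h1, if_neg h2, hsumk k h1 h2]; ring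
    rw [Finset.sum_congr rfl (fun k _ => this k)]
    rw [Finset.sum_add_distrib, Finset.sum_add_distrib]
    simp [Finset.sum_ite_eq']
    ring
  have := hopt.2 P' hpart
  rw [hkey] at this
  linarith

open Classical in
theorem optimal_partition_subset_nash_weight {n m : ℕ} (f : Fin n → Fin m → ℝ)
    (hf : ∀ i q, 0 ≤ f i q)
    (hnt : ∀ q : Fin m, ∃ j : Fin n, ¬ Dominating f j q)
    (Pstar : Fin n → Finset (Fin m)) (hopt : IsOptimalPartition f Pstar) :
    ∃ what : Fin n → Fin m → ℝ, InUnit what ∧ IsNashW f what ∧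
      ∀ i, Pstar i = Finset.univ.filter (fun q => what i q = 1) := by
  classical
  set what : Fin n → Fin m → ℝ := fun i q => if q ∈ Pstar i then 1 else 0 with hwdef
  refine ⟨what, ?_, ?_, ?_⟩
  · intro i q
    by_cases h : q ∈ Pstar i <;> simp [hwdef, h]
  · intro i w' hw'
    unfold Uutil
    apply Finset.sum_le_sum
    intro q _
    have hM : maxErase i (fun j => f j q * Function.update what i w' j q)
        = maxErase i (fun j => f j q * what j q) := by
      unfold maxErase
      congr 1
      apply Finset.image_congr
      intro j hj
      have hji : j ≠ i := by
        simp only [Finset.coe_erase, Set.mem_diff, Finset.mem_coe,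
          Set.mem_singleton_iff] at hj
        simpa using hj.2
      show f j q * Function.update what i w' j q = f j q * what j q
      rw [Function.update_of_ne hji]
    rw [Function.update_self, hM]
    set M := maxErase i (fun j => f j q * what j q) with hMdef
    by_cases hq : q ∈ Pstar i
    · have hM0 : M = 0 := by
        rw [hMdef]
        unfold maxErase
        apply fsMax_zero
        intro x hx
        simp only [Finset.mem_image, Finset.mem_erase] at hx
        obtain ⟨j, ⟨hji, _⟩, rfl⟩ := hx
        have hnm : q ∉ Pstar j := fun h =>
          Finset.disjoint_left.mp (hopt.1.1 j i hji) h hq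
        simp [hwdef, hnm]
      have h1 : what i q = 1 := by simp [hwdef, hq]
      rw [hM0, h1]
      have h2 := (hw' q).2
      have h3 := (hw' q).1
      nlinarith [hf i q]
    · obtain ⟨j, hjq⟩ := hopt.1.2 q
      have hji : j ≠ i := by rintro rfl; exact hq hjq
      have hdom := mem_opt_dominating f Pstar hopt hjq i
      have hMj : f j q * what j q ≤ M := by
        rw [hMdef]
        unfold maxErase
        exact le_fsMax (Finset.mem_image_of_mem _
          (Finset.mem_erase.mpr ⟨hji, Finset.mem_univ j⟩))
      have hwj : what j q = 1 := by simp [hwdef, hjq]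
      rw [hwj, mul_one] at hMj
      have h0 : what i q = 0 := by simp [hwdef, hq]
      rw [h0]
      have h3 := (hw' q).1
      nlinarith
  · intro i
    ext q
    simp only [Finset.mem_filter, Finset.mem_univ, true_and]
    by_cases h : q ∈ Pstar i <;> simp [hwdef, h]
end

section
/- Suppose n ≥ 2, let W be a PBRAG trajectory and q a task, and suppose some agent i dominating for q satisfies W t i q → 1 as t → ∞. Then for every agent j that is not dominating for q there exists τ : ℕ such that W t j q = 0 for all t ≥ τ. -/
open Finset Filter

noncomputable def clamp (x : ℝ) : ℝ := max 0 (min x 1)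

/-- One step of the projected best-response ascending gradient dynamics. -/
noncomputable def pbrag {n m : ℕ} (f γ : Fin n → Fin m → ℝ)
    (w : Fin n → Fin m → ℝ) : Fin n → Fin m → ℝ :=
  fun i q => clamp (w i q + γ i q * (f i q - maxErase i (fun j => f j q * w j q)))

lemma le_maxErase {n : ℕ} {i j : Fin n} (h : i ≠ j) (g : Fin n → ℝ) :
    g i ≤ maxErase j g :=
  le_fsMax (Finset.mem_image.mpr ⟨i, Finset.mem_erase.mpr ⟨h, Finset.mem_univ i⟩, rfl⟩)

lemma clamp_mem (x : ℝ) : clamp x ∈ Set.Icc (0 : ℝ) 1 :=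
  ⟨le_max_left _ _, max_le zero_le_one (min_le_right _ _)⟩

lemma clamp_le (x : ℝ) : clamp x ≤ max 0 x :=
  max_le_max le_rfl (min_le_left _ _)

theorem pbrag_nondominating_vanishes {n m : ℕ} (hn : 2 ≤ n) (f : Fin n → Fin m → ℝ)
    (hf : ∀ i q, 0 ≤ f i q)
    (γ : Fin n → Fin m → ℝ) (hγ : ∀ i q, 0 < γ i q)
    (W : ℕ → Fin n → Fin m → ℝ)
    (hW0 : InUnit (W 0)) (hWs : ∀ t, W (t + 1) = pbrag f γ (W t))
    (q : Fin m) (i : Fin n) (hdom : Dominating f i q)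
    (hlim : Tendsto (fun t => W t i q) atTop (nhds 1)) :
    ∀ j : Fin n, ¬ Dominating f j q → ∃ τ : ℕ, ∀ t, τ ≤ t → W t j q = 0 := by
  have hunit : ∀ t, InUnit (W t) := by
    intro t
    induction t with
    | zero => exact hW0
    | succ t _ => intro a b; rw [hWs t]; exact clamp_mem _
  intro j hjd
  have hfij : f j q < f i q := by
    rcases not_forall.mp hjd with ⟨k, hk⟩
    push_neg at hk
    exact lt_of_lt_of_le hk (hdom k)
  have hfi : 0 < f i q := lt_of_le_of_lt (hf j q) hfij
  have hij : i ≠ j := fun h => absurd hfij (by rw [h]; exact lt_irrefl _)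
  set ε : ℝ := (f i q - f j q) / 2 with hε
  have hεpos : 0 < ε := by simp [hε]; linarith
  set ε0 : ℝ := ε / f i q with hε0
  have hε0pos : 0 < ε0 := div_pos hεpos hfi
  have h1 : ∀ᶠ t in atTop, 1 - ε0 < W t i q :=
    hlim.eventually (eventually_gt_nhds (by linarith))
  obtain ⟨t₀, ht₀⟩ := eventually_atTop.mp h1
  set δ : ℝ := γ j q * ε with hδ
  have hδpos : 0 < δ := mul_pos (hγ j q) hεpos
  have step : ∀ t, t₀ ≤ t → W (t + 1) j q ≤ max 0 (W t j q - δ) := by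
    intro t ht
    rw [hWs t]
    have hM : f i q * W t i q ≤ maxErase j (fun k => f k q * W t k q) := by
      exact le_maxErase hij (fun k => f k q * W t k q)
    have hWi : 1 - ε0 < W t i q := ht₀ t ht
    have hmul : f i q * (1 - ε0) ≤ f i q * W t i q :=
      mul_le_mul_of_nonneg_left hWi.le hfi.le
    have hcalc : f i q * (1 - ε0) = f i q - ε := by
      rw [hε0, mul_sub, mul_one, mul_div_assoc', mul_div_cancel_left₀ _ hfi.ne']
    have hgrad : f j q - maxErase j (fun k => f k q * W t k q) ≤ -ε := by
      rw [hcalc] at hmul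
      have : f i q - ε ≤ maxErase j (fun k => f k q * W t k q) := le_trans hmul hM
      simp only [hε] at this ⊢
      linarith
    have harg : W t j q + γ j q * (f j q - maxErase j (fun k => f k q * W t k q))
        ≤ W t j q - δ := by
      have := mul_le_mul_of_nonneg_left hgrad (hγ j q).le
      simp only [hδ]
      nlinarith
    calc pbrag f γ (W t) j q ≤ max 0 (W t j q + γ j q *
          (f j q - maxErase j (fun k => f k q * W t k q))) := clamp_le _
      _ ≤ max 0 (W t j q - δ) := max_le_max le_rfl harg
  have decay : ∀ k : ℕ, W (t₀ + k) j q ≤ max 0 (1 - k * δ) := by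
    intro k
    induction k with
    | zero =>
      simp only [Nat.cast_zero, zero_mul, sub_zero, Nat.add_zero]
      exact le_trans (hunit t₀ j q).2 (le_max_right _ _)
    | succ k IH =>
      have h1 : W (t₀ + k + 1) j q ≤ max 0 (W (t₀ + k) j q - δ) :=
        step _ (Nat.le_add_right _ _)
      have h2 : W (t₀ + k) j q - δ ≤ max 0 (1 - k * δ) - δ := by linarith
      have h3 : max 0 (max 0 (1 - k * δ) - δ) ≤ max 0 (1 - (k + 1 : ℕ) * δ) := by
        push_cast
        rcases le_total (1 - (k : ℝ) * δ) 0 with h | h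
        · rw [max_eq_left h]
          exact max_le (le_max_left _ _)
            (le_trans (by linarith : (0:ℝ) - δ ≤ 0) (le_max_left _ _))
        · rw [max_eq_right h]
          have he : 1 - (k:ℝ) * δ - δ = 1 - ((k:ℝ) + 1) * δ := by ring
          rw [he]
      calc W (t₀ + (k + 1)) j q = W (t₀ + k + 1) j q := rfl
        _ ≤ max 0 (W (t₀ + k) j q - δ) := h1
        _ ≤ max 0 (max 0 (1 - k * δ) - δ) := max_le_max le_rfl h2
        _ ≤ _ := h3
  obtain ⟨K, hK⟩ := exists_nat_ge (1 / δ)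
  refine ⟨t₀ + K, fun t ht => ?_⟩
  obtain ⟨k, rfl⟩ := Nat.exists_eq_add_of_le ht
  have hkK : K ≤ K + k := Nat.le_add_right _ _
  have hb := decay (K + k)
  have hKδ : 1 ≤ (K : ℝ) * δ := by
    rw [div_le_iff₀ hδpos] at hK; linarith
  have hle : (K : ℝ) * δ ≤ ((K + k : ℕ) : ℝ) * δ := by
    apply mul_le_mul_of_nonneg_right _ hδpos.le
    exact_mod_cast hkK
  have : max 0 (1 - ((K + k : ℕ) : ℝ) * δ) = 0 := max_eq_left (by linarith)
  rw [this] at hb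
  rw [← Nat.add_assoc] at hb
  exact le_antisymm hb (hunit _ j q).1
end
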